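/- Let C be an (n,k,ℓ) MDS array code over F_q in systematic form with block matrix A (r = n−k, 2 ≤ h ≤ r, β = hℓ/r an integer), and let F_1 and F_2 be two DISJOINT h-subsets of the systematic nodes, each admitting an (h, n−h) optimal repair scheme (with repair matrices S_{j→F_1} and S_{j→F_2} respectively). Then rank( S_{P→F_2}·A(:,F_1) ) = h²ℓ/r, and the row space of S_{P→F_2}·A(:,F_1) equals the row space of the block-diagonal matrix S_{F_1→F_2} = diag(S_{u→F_2})_{u∈F_1}, where S_{P→F_2} = diag(S_{p_1→F_2},…,S_{p_r→F_2}). -/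

import Mathlib

open Matrix

noncomputable section

variable {𝔽 : Type*} [Field 𝔽]

/-- Every square block submatrix of the `r × k` block matrix `A` (with `ℓ × ℓ` blocks) is
invertible; this is the MDS property of the systematic-form array code determined by `A`. -/
def BlockInvertible {r k ℓ : ℕ} (A : Fin r → Fin k → Matrix (Fin ℓ) (Fin ℓ) 𝔽) : Prop :=
  ∀ (I : Finset (Fin r)) (J : Finset (Fin k)), I.card = J.card →
    Function.Bijective
      ((Matrix.of fun p : ↥I × Fin ℓ => fun q : ↥J × Fin ℓ =>
        A p.1.1 q.1.1 p.2 q.2).mulVecLin)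

/-- The value of the codeword parameterized by the systematic data `x` at a node:
nodes are indexed by `Fin k ⊕ Fin r` (systematic nodes `u_j = Sum.inl j`,
parity nodes `p_i = Sum.inr i`), and `C_{p_i} = ∑ j, A_{p_i,u_j} x_j`. -/
def nodeVal {r k ℓ : ℕ} (A : Fin r → Fin k → Matrix (Fin ℓ) (Fin ℓ) 𝔽)
    (x : Fin k → Fin ℓ → 𝔽) : Fin k ⊕ Fin r → Fin ℓ → 𝔽
  | Sum.inl j => x j
  | Sum.inr i => ∑ j, (A i j).mulVec (x j)

/-- The helper nodes for a failed set `F` of systematic nodes: all `n - h` other nodes. -/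
def helperSet {r k : ℕ} (F : Finset (Fin k)) : Finset (Fin k ⊕ Fin r) :=
  (F.map ⟨Sum.inl, Sum.inl_injective⟩)ᶜ

/-- An `(h, n-h)` optimal repair scheme for the failed set `F` of systematic nodes of the
systematic-form code determined by `A`: each helper node `j` sends `S j *ᵥ C_j`, and a
linear map `g` (the matrix `M_F`) reconstructs the stacked failed symbols. -/
def SysRepairScheme {r k ℓ β : ℕ} (A : Fin r → Fin k → Matrix (Fin ℓ) (Fin ℓ) 𝔽)
    (F : Finset (Fin k)) (S : Fin k ⊕ Fin r → Matrix (Fin β) (Fin ℓ) 𝔽) : Prop :=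
  ∃ g : (↥(helperSet (r := r) F) → Fin β → 𝔽) →ₗ[𝔽] (↥F → Fin ℓ → 𝔽),
    ∀ x : Fin k → Fin ℓ → 𝔽, ∀ i : ↥F,
      x i.1 = g (fun j => (S j.1).mulVec (nodeVal A x j.1)) i

/-- The row space of a matrix. -/
def rowSpace {m n : Type*} (S : Matrix m n 𝔽) : Submodule 𝔽 (n → 𝔽) :=
  Submodule.span 𝔽 (Set.range fun i : m => fun j : n => S i j)

/-! ### Auxiliary lemmas -/

lemma finrank_rowSpace {m n : Type*} [Fintype m] [Fintype n] [DecidableEq n]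
    (A : Matrix m n 𝔽) : Module.finrank 𝔽 (rowSpace A) = A.rank :=
  (Matrix.rank_eq_finrank_span_row A).symm

lemma rowSpace_eq_range {m n : Type*} [Fintype m] (S : Matrix m n 𝔽) :
    rowSpace S = LinearMap.range Sᵀ.mulVecLin := by
  rw [Matrix.range_mulVecLin]; rfl

lemma rowSpace_mul_le {m m' n : Type*} [Fintype m] [Fintype m'] (C : Matrix m m' 𝔽)
    (S : Matrix m' n 𝔽) : rowSpace (C * S) ≤ rowSpace S := by
  rw [rowSpace_eq_range, rowSpace_eq_range, transpose_mul, Matrix.mulVecLin_mul]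
  exact LinearMap.range_comp_le_range _ _

lemma rowSpace_mono {m m' n : Type*} (B : Matrix m' n 𝔽) (A : Matrix m n 𝔽)
    (hrows : ∀ i : m', ∃ i' : m, B i = A i') : rowSpace B ≤ rowSpace A := by
  refine Submodule.span_le.mpr ?_
  rintro _ ⟨i, rfl⟩
  obtain ⟨i', hi'⟩ := hrows i
  exact Submodule.subset_span ⟨i', hi'.symm⟩

section aux
variable {r k ℓ β : ℕ}

lemma mem_helperSet_inl {F : Finset (Fin k)} {u : Fin k}
    (h : (Sum.inl u : Fin k ⊕ Fin r) ∈ helperSet (r := r) F) : u ∉ F := by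
  intro hu
  simp [helperSet] at h
  exact h hu

/-- extension by zero of data on `F` -/
def extz (F : Finset (Fin k)) (z : ↥F → Fin ℓ → 𝔽) : Fin k → Fin ℓ → 𝔽 :=
  fun j => if hj : j ∈ F then z ⟨j, hj⟩ else 0

lemma nodeVal_extz (A : Fin r → Fin k → Matrix (Fin ℓ) (Fin ℓ) 𝔽)
    (F : Finset (Fin k)) (z : ↥F → Fin ℓ → 𝔽) (i : Fin r) :
    nodeVal A (extz F z) (Sum.inr i) = ∑ v : ↥F, (A i v.1).mulVec (z v) := by
  show ∑ j, (A i j).mulVec (extz F z j) = _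
  have h1 : ∑ j, (A i j).mulVec (extz F z j) = ∑ j ∈ F, (A i j).mulVec (extz F z j) := by
    refine (Finset.sum_subset (Finset.subset_univ F) ?_).symm
    intro j _ hj
    simp [extz, dif_neg hj]
  rw [h1, ← Finset.sum_coe_sort F (fun j => (A i j).mulVec (extz F z j))]
  refine Finset.sum_congr rfl fun v _ => ?_
  simp [extz]

variable (F₁ F₂ : Finset (Fin k)) (S₂ : Fin k ⊕ Fin r → Matrix (Fin β) (Fin ℓ) 𝔽)
  (A : Fin r → Fin k → Matrix (Fin ℓ) (Fin ℓ) 𝔽)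

/-- place parity data into helper-indexed vector -/
def iotaP : (Fin r → Fin β → 𝔽) →ₗ[𝔽] (↥(helperSet (r := r) F₂) → Fin β → 𝔽) where
  toFun w := fun j => Sum.elim (fun _ => 0) w j.1
  map_add' w w' := by funext j; rcases j with ⟨(u|i), hj⟩ <;> simp
  map_smul' c w := by funext j; rcases j with ⟨(u|i), hj⟩ <;> simp

/-- place systematic `F₁` data into helper-indexed vector -/
def iota1 : (↥F₁ → Fin β → 𝔽) →ₗ[𝔽] (↥(helperSet (r := r) F₂) → Fin β → 𝔽) where
  toFun a := fun j => Sum.elim (fun u => if hu : u ∈ F₁ then a ⟨u, hu⟩ else 0) (fun _ => 0) j.1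
  map_add' a a' := by
    funext j; rcases j with ⟨(u|i), hj⟩
    · simp only [Pi.add_apply, Sum.elim_inl]
      split <;> simp
    · simp
  map_smul' c a := by
    funext j; rcases j with ⟨(u|i), hj⟩
    · simp only [Pi.smul_apply, Sum.elim_inl, RingHom.id_apply]
      split <;> simp
    · simp

/-- parity transmissions for data on `F` -/
def PhiF (F : Finset (Fin k)) (y : ↥F → Fin ℓ → 𝔽) : Fin r → Fin β → 𝔽 :=
  fun i => (S₂ (Sum.inr i)).mulVec (∑ v : ↥F, (A i v.1).mulVec (y v))

lemma input_two (y : ↥F₂ → Fin ℓ → 𝔽) :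
    (fun j : ↥(helperSet (r := r) F₂) => (S₂ j.1).mulVec (nodeVal A (extz F₂ y) j.1)) =
      iotaP F₂ (PhiF S₂ A F₂ y) := by
  funext j
  rcases j with ⟨(u|i), hj⟩
  · have hu : u ∉ F₂ := mem_helperSet_inl hj
    show (S₂ (Sum.inl u)).mulVec (extz F₂ y u) = _
    simp [iotaP, extz, dif_neg hu]
  · show (S₂ (Sum.inr i)).mulVec (nodeVal A (extz F₂ y) (Sum.inr i)) = _
    rw [nodeVal_extz]
    simp [iotaP, PhiF]

lemma input_one (z : ↥F₁ → Fin ℓ → 𝔽) :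
    (fun j : ↥(helperSet (r := r) F₂) => (S₂ j.1).mulVec (nodeVal A (extz F₁ z) j.1)) =
      iota1 F₁ F₂ (fun u => (S₂ (Sum.inl u.1)).mulVec (z u)) + iotaP F₂ (PhiF S₂ A F₁ z) := by
  funext j
  rcases j with ⟨(u|i), hj⟩
  · show (S₂ (Sum.inl u)).mulVec (extz F₁ z u) = _
    simp only [Pi.add_apply, iota1, iotaP, LinearMap.coe_mk, AddHom.coe_mk, Sum.elim_inl,
      add_zero]
    by_cases hu : u ∈ F₁
    · simp [extz, dif_pos hu]
    · simp [extz, dif_neg hu]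
  · show (S₂ (Sum.inr i)).mulVec (nodeVal A (extz F₁ z) (Sum.inr i)) = _
    rw [nodeVal_extz]
    simp [iota1, iotaP, PhiF]

end aux

/-- Lemma 2 of the paper, equality part for disjoint failed sets:
if `F₁ ∩ F₂ = ∅` then `rank(S_{P→F₂} ⬝ A(:,F₁)) = h²ℓ/r = h·β` and
`⟨S_{P→F₂} ⬝ A(:,F₁)⟩ = ⟨S_{F₁→F₂}⟩`, the latter being the block-diagonal matrix
`diag(S_{u→F₂})_{u ∈ F₁}`. -/
theorem stmt8 {r k ℓ h β : ℕ} (hh2 : 2 ≤ h) (hhr : h ≤ r) (hβ : h * ℓ = r * β)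
    (A : Fin r → Fin k → Matrix (Fin ℓ) (Fin ℓ) 𝔽) (hA : BlockInvertible A)
    (F₁ F₂ : Finset (Fin k)) (hF₁ : F₁.card = h) (hF₂ : F₂.card = h)
    (hdisj : Disjoint F₁ F₂)
    (S₁ S₂ : Fin k ⊕ Fin r → Matrix (Fin β) (Fin ℓ) 𝔽)
    (hS₁ : SysRepairScheme A F₁ S₁) (hS₂ : SysRepairScheme A F₂ S₂) :
    (Matrix.of fun p : Fin r × Fin β => fun q : ↥F₁ × Fin ℓ =>
        (S₂ (Sum.inr p.1) * A p.1 q.1.1) p.2 q.2).rank = h * β ∧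
    rowSpace (Matrix.of fun p : Fin r × Fin β => fun q : ↥F₁ × Fin ℓ =>
        (S₂ (Sum.inr p.1) * A p.1 q.1.1) p.2 q.2) =
      rowSpace (Matrix.of fun p : ↥F₁ × Fin β => fun q : ↥F₁ × Fin ℓ =>
        if p.1 = q.1 then S₂ (Sum.inl p.1.1) p.2 q.2 else 0) := by
  classical
  obtain ⟨g, hg⟩ := hS₂
  set M : Matrix (Fin r × Fin β) (↥F₁ × Fin ℓ) 𝔽 :=
    Matrix.of fun p => fun q => (S₂ (Sum.inr p.1) * A p.1 q.1.1) p.2 q.2 with hMdef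
  set Sm : Matrix (↥F₁ × Fin β) (↥F₁ × Fin ℓ) 𝔽 :=
    Matrix.of fun p => fun q => if p.1 = q.1 then S₂ (Sum.inl p.1.1) p.2 q.2 else 0 with hSmdef
  -- the decoding maps
  set H : (Fin r → Fin β → 𝔽) →ₗ[𝔽] (↥F₂ → Fin ℓ → 𝔽) := g ∘ₗ iotaP F₂ with hHdef
  set G : (↥F₁ → Fin β → 𝔽) →ₗ[𝔽] (↥F₂ → Fin ℓ → 𝔽) := g ∘ₗ iota1 F₁ F₂ with hGdef
  have hHΦ : ∀ y : ↥F₂ → Fin ℓ → 𝔽, H (PhiF S₂ A F₂ y) = y := by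
    intro y
    funext i
    have h1 := hg (extz F₂ y) i
    rw [input_two F₂ S₂ A y] at h1
    have h2 : extz F₂ y i.1 = y i := by simp [extz, dif_pos i.2]
    rw [h2] at h1
    exact h1.symm
  have hHsurj : Function.Surjective H := fun y => ⟨_, hHΦ y⟩
  have hfr : Module.finrank 𝔽 (Fin r → Fin β → 𝔽) = Module.finrank 𝔽 (↥F₂ → Fin ℓ → 𝔽) := by
    have c1 : Module.finrank 𝔽 (Fin r → Fin β → 𝔽) = r * β := by
      rw [← LinearEquiv.finrank_eq (LinearEquiv.curry 𝔽 𝔽 (Fin r) (Fin β)), Module.finrank_pi]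
      simp
    have c2 : Module.finrank 𝔽 (↥F₂ → Fin ℓ → 𝔽) = h * ℓ := by
      rw [← LinearEquiv.finrank_eq (LinearEquiv.curry 𝔽 𝔽 (↥F₂) (Fin ℓ)), Module.finrank_pi]
      simp [hF₂]
    rw [c1, c2]
    omega
  have hHinj : Function.Injective H :=
    (LinearMap.injective_iff_surjective_of_finrank_eq_finrank hfr).mpr hHsurj
  set He : (Fin r → Fin β → 𝔽) ≃ₗ[𝔽] (↥F₂ → Fin ℓ → 𝔽) :=
    LinearEquiv.ofBijective H ⟨hHinj, hHsurj⟩ with hHe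
  have hPhiH : ∀ w, PhiF S₂ A F₂ (H w) = w := by
    intro w
    exact hHinj (hHΦ (H w))
  have hSsurj : ∀ i : Fin r, Function.Surjective (S₂ (Sum.inr i)).mulVecLin := by
    intro i t
    refine ⟨∑ v : ↥F₂, (A i v.1).mulVec (H (fun _ => t) v), ?_⟩
    rw [mulVecLin_apply]
    exact congrFun (hPhiH fun _ => t) i
  -- the key decoding identity for data supported on F₁
  have hdec : ∀ z : ↥F₁ → Fin ℓ → 𝔽,
      H (PhiF S₂ A F₁ z) = - G (fun u => (S₂ (Sum.inl u.1)).mulVec (z u)) := by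
    intro z
    have h0 : (fun i : ↥F₂ => extz F₁ z i.1) = 0 := by
      funext i
      have hi : i.1 ∉ F₁ := fun hi => (Finset.disjoint_left.mp hdisj hi) i.2
      simp [extz, dif_neg hi]
    have h1 : (0 : ↥F₂ → Fin ℓ → 𝔽) =
        g (iota1 F₁ F₂ (fun u => (S₂ (Sum.inl u.1)).mulVec (z u)) + iotaP F₂ (PhiF S₂ A F₁ z)) := by
      funext i
      have := hg (extz F₁ z) i
      rw [input_one] at this
      rw [← this]
      exact (congrFun h0 i).symm
    rw [map_add] at h1
    have : G (fun u => (S₂ (Sum.inl u.1)).mulVec (z u)) + H (PhiF S₂ A F₁ z) = 0 := h1.symm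
    exact eq_neg_of_add_eq_zero_right this
  -- mulVec computations
  have hMmul : ∀ x : ↥F₁ × Fin ℓ → 𝔽,
      M *ᵥ x = fun p => PhiF S₂ A F₁ (fun u l => x (u, l)) p.1 p.2 := by
    intro x
    funext p
    have hw : ∀ t, (∑ v : ↥F₁, (A p.1 v.1).mulVec (fun l => x (v, l))) t
        = ∑ q : ↥F₁ × Fin ℓ, A p.1 q.1.1 t q.2 * x q := by
      intro t
      simp [Matrix.mulVec, dotProduct, Fintype.sum_prod_type, Finset.sum_apply]
    show ∑ q : ↥F₁ × Fin ℓ, M p q * x q = (S₂ (Sum.inr p.1)).mulVec _ p.2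
    simp only [Matrix.mulVec, dotProduct, hw, hMdef, Matrix.of_apply, Matrix.mul_apply,
      Finset.mul_sum, Finset.sum_mul]
    rw [Finset.sum_comm]
    refine Finset.sum_congr rfl fun t _ => Finset.sum_congr rfl fun q _ => ?_
    ring
  have hSmul : ∀ x : ↥F₁ × Fin ℓ → 𝔽,
      Sm *ᵥ x = fun p => (S₂ (Sum.inl p.1.1)).mulVec (fun l => x (p.1, l)) p.2 := by
    intro x
    funext p
    show ∑ q : ↥F₁ × Fin ℓ, Sm p q * x q = _
    simp only [hSmdef, Matrix.of_apply, Matrix.mulVec, dotProduct, Fintype.sum_prod_type,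
      ite_mul, zero_mul]
    rw [Finset.sum_comm]
    simp [Finset.sum_ite_eq' Finset.univ p.1]
  -- the factorization M = C * Sm
  set N : (↥F₁ × Fin β → 𝔽) →ₗ[𝔽] (Fin r × Fin β → 𝔽) :=
    (LinearEquiv.curry 𝔽 𝔽 (Fin r) (Fin β)).symm.toLinearMap ∘ₗ
      ((He.symm.toLinearMap ∘ₗ (-G)) ∘ₗ (LinearEquiv.curry 𝔽 𝔽 (↥F₁) (Fin β)).toLinearMap)
    with hN
  have key : ∀ x : ↥F₁ × Fin ℓ → 𝔽, M *ᵥ x = N (Sm *ᵥ x) := by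
    intro x
    have h1 : PhiF S₂ A F₁ (fun u l => x (u, l)) =
        He.symm (-(G (fun u => (S₂ (Sum.inl u.1)).mulVec (fun l => x (u, l))))) := by
      refine (LinearEquiv.eq_symm_apply He).mpr ?_
      exact hdec _
    rw [hMmul, hSmul]
    have h2 : N (fun p => (S₂ (Sum.inl p.1.1)).mulVec (fun l => x (p.1, l)) p.2) =
        fun p => (He.symm (-(G (fun u => (S₂ (Sum.inl u.1)).mulVec (fun l => x (u, l))))))
          p.1 p.2 := rfl
    rw [h2, ← h1]
  set C := LinearMap.toMatrix' N with hC
  have hCS : M = C * Sm := by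
    ext p q
    have h3 : ∀ v, N v = C *ᵥ v := fun v => by
      rw [hC, ← Matrix.toLin'_apply, Matrix.toLin'_toMatrix']
    have h2 := congrFun (key (Pi.single q 1)) p
    rw [h3, Matrix.mulVec_mulVec] at h2
    simpa using h2
  have hrow_le : rowSpace M ≤ rowSpace Sm := hCS ▸ rowSpace_mul_le C Sm
  -- lower bound via an h-subset of the parities and the MDS property
  obtain ⟨I, -, hI⟩ := Finset.exists_subset_card_eq
    (s := (Finset.univ : Finset (Fin r))) (n := h) (by simpa using hhr)
  set B : Matrix (↥I × Fin ℓ) (↥F₁ × Fin ℓ) 𝔽 :=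
    Matrix.of fun p q => A p.1.1 q.1.1 p.2 q.2 with hBdef
  have hB : Function.Bijective B.mulVecLin := hA I F₁ (by rw [hI, hF₁])
  set D : Matrix (↥I × Fin β) (↥I × Fin ℓ) 𝔽 :=
    Matrix.of fun p q => if p.1 = q.1 then S₂ (Sum.inr p.1.1) p.2 q.2 else 0 with hDdef
  have hDmul : ∀ x : ↥I × Fin ℓ → 𝔽,
      D *ᵥ x = fun p => (S₂ (Sum.inr p.1.1)).mulVec (fun l => x (p.1, l)) p.2 := by
    intro x
    funext p
    show ∑ q : ↥I × Fin ℓ, D p q * x q = _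
    simp only [hDdef, Matrix.of_apply, Matrix.mulVec, dotProduct, Fintype.sum_prod_type,
      ite_mul, zero_mul]
    rw [Finset.sum_comm]
    simp [Finset.sum_ite_eq' Finset.univ p.1]
  have hDsurj : Function.Surjective D.mulVecLin := by
    intro w
    choose y hy using fun i : ↥I => hSsurj i.1 (fun b => w (i, b))
    refine ⟨fun q => y q.1 q.2, ?_⟩
    rw [mulVecLin_apply, hDmul]
    funext p
    have := congrFun (hy p.1) p.2
    exact this
  have hDB : D * B = M.submatrix (fun p : ↥I × Fin β => (p.1.1, p.2)) id := by
    ext p q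
    show ∑ t : ↥I × Fin ℓ, D p t * B t q = M (p.1.1, p.2) q
    simp only [hDdef, hBdef, Matrix.of_apply, ite_mul, zero_mul, Fintype.sum_prod_type]
    rw [Finset.sum_comm]
    simp only [Finset.sum_ite_eq Finset.univ p.1, Finset.mem_univ, if_true]
    show _ = (S₂ (Sum.inr p.1.1) * A p.1.1 q.1.1) p.2 q.2
    rw [Matrix.mul_apply]
  have hDBsurj : Function.Surjective (D * B).mulVecLin := by
    rw [Matrix.mulVecLin_mul, LinearMap.coe_comp]
    exact Function.Surjective.comp hDsurj hB.2
  have hrankDB : (D * B).rank = h * β := by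
    rw [Matrix.rank, LinearMap.range_eq_top.mpr hDBsurj, finrank_top, Module.finrank_pi]
    simp [hI]
  have hsub_le : rowSpace (M.submatrix (fun p : ↥I × Fin β => (p.1.1, p.2)) id) ≤ rowSpace M :=
    rowSpace_mono _ _ (fun i => ⟨(i.1.1, i.2), rfl⟩)
  have hMrank_ge : h * β ≤ M.rank := by
    calc h * β = (D * B).rank := hrankDB.symm
      _ = (M.submatrix (fun p : ↥I × Fin β => (p.1.1, p.2)) id).rank := by rw [hDB]
      _ = Module.finrank 𝔽 (rowSpace (M.submatrix (fun p : ↥I × Fin β => (p.1.1, p.2)) id)) :=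
          (finrank_rowSpace _).symm
      _ ≤ Module.finrank 𝔽 (rowSpace M) := Submodule.finrank_mono hsub_le
      _ = M.rank := finrank_rowSpace M
  have hSmrank_le : Sm.rank ≤ h * β := by
    calc Sm.rank ≤ Fintype.card (↥F₁ × Fin β) := Matrix.rank_le_card_height Sm
      _ = h * β := by simp [hF₁]
  have hMrank_le : M.rank ≤ h * β := by
    calc M.rank = Module.finrank 𝔽 (rowSpace M) := (finrank_rowSpace M).symm
      _ ≤ Module.finrank 𝔽 (rowSpace Sm) := Submodule.finrank_mono hrow_le
      _ = Sm.rank := finrank_rowSpace Sm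
      _ ≤ h * β := hSmrank_le
  have hMrank : M.rank = h * β := le_antisymm hMrank_le hMrank_ge
  refine ⟨hMrank, ?_⟩
  refine Submodule.eq_of_le_of_finrank_le hrow_le ?_
  rw [finrank_rowSpace, finrank_rowSpace, hMrank]
  exact hSmrank_le
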